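/- Let (h_i)_{i≥0} be the Haar system on [0,1] and H_k = {h_i : 2^k ≤ i ≤ 2^{k+1}−1} (with H_{−1} = {h₀}). Let X_n = span({h₀} ∪ ⋃_{k=0}^n H_k), and let G be the finite group of linear maps of X_n generated by the reflections g_i (which swap the two halves of the support of h_i and fix everything outside). Let ‖·‖ be a norm on X_n for which each g_i is an isometry, let A ⊆ {−1,0,…,n} be nonempty, and Y = span(⋃_{k∈A} H_k). Then every linear projection P of X_n onto Y satisfies ‖P‖ ≥ ‖P_Y‖, where P_Y is the orthogonal (L²) projection onto Y. -/

import Mathlib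

open Classical in
/-- The Haar system on `(0,1]`: `h₀ = 1_{(0,1]}`, and for `i = 2^m + j` (`0 ≤ j < 2^m`),
`h_i = 1_{(j/2^m,(2j+1)/2^{m+1}]} - 1_{((2j+1)/2^{m+1},(j+1)/2^m]}`. -/
noncomputable def haar (i : ℕ) (t : ℝ) : ℝ :=
  if i = 0 then (if 0 < t ∧ t ≤ 1 then 1 else 0)
  else
    let m := Nat.log2 i
    let j : ℝ := ((i - 2 ^ m : ℕ) : ℝ)
    if j / 2 ^ m < t ∧ t ≤ (2 * j + 1) / 2 ^ (m + 1) then 1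
    else if (2 * j + 1) / 2 ^ (m + 1) < t ∧ t ≤ (j + 1) / 2 ^ m then -1
    else 0

/-- The `k`-th level of the Haar system: `H_k = {h_i : 2^k ≤ i < 2^{k+1}}`. -/
def haarLevel (k : ℕ) : Set (ℝ → ℝ) := haar '' Set.Ico (2 ^ k) (2 ^ (k + 1))

/-- The `L²[0,1]` inner product. -/
noncomputable def L2inner (f g : ℝ → ℝ) : ℝ := ∫ t in (0:ℝ)..1, f t * g t

/-- The `L¹[0,1]` norm. -/
noncomputable def L1normI (f : ℝ → ℝ) : ℝ := ∫ t in (0:ℝ)..1, |f t|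

open Classical in
/-- The reflection `g_i` (for `h_i ∈ H_k`) swapping the two halves of the support of the
Haar function `h_i` and fixing everything outside it. -/
noncomputable def gmap (i : ℕ) (f : ℝ → ℝ) : ℝ → ℝ := fun t =>
  if haar i t = 1 then f (t + 1 / 2 ^ (Nat.log2 i + 1))
  else if haar i t = -1 then f (t - 1 / 2 ^ (Nat.log2 i + 1))
  else f t

namespace Stmt11
noncomputable section
open Set

def lev (i : ℕ) : ℕ := Nat.log2 i
def posn (i : ℕ) : ℕ := i - 2 ^ lev i
def pa (i : ℕ) : ℝ := (posn i) / 2 ^ lev i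
def pm (i : ℕ) : ℝ := (2 * posn i + 1) / 2 ^ (lev i + 1)
def pb (i : ℕ) : ℝ := (posn i + 1) / 2 ^ lev i
def dl (i : ℕ) : ℝ := 1 / 2 ^ (lev i + 1)

theorem pow_lev_le (i : ℕ) (hi : 1 ≤ i) : 2 ^ lev i ≤ i := by
  rw [lev, Nat.log2_eq_log_two]
  exact Nat.pow_log_le_self 2 (by omega)

theorem lt_pow_lev (i : ℕ) : i < 2 ^ (lev i + 1) := by
  rcases Nat.eq_zero_or_pos i with h | h
  · subst h; positivity
  rw [lev, Nat.log2_eq_log_two]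
  exact Nat.lt_pow_succ_log_self (by omega) i

theorem lev_eq (L x : ℕ) (h1 : 2 ^ L ≤ x) (h2 : x < 2 ^ (L + 1)) : lev x = L := by
  rw [lev, Nat.log2_eq_log_two]
  exact Nat.log_eq_of_pow_le_of_lt_pow h1 h2

theorem posn_lt (i : ℕ) (hi : 1 ≤ i) : posn i < 2 ^ lev i := by
  have h1 := pow_lev_le i hi
  have h2 := lt_pow_lev i
  have : 2 ^ (lev i + 1) = 2 ^ lev i + 2 ^ lev i := by ring
  rw [posn]; omega

theorem i_eq (i : ℕ) (hi : 1 ≤ i) : i = 2 ^ lev i + posn i := by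
  have := pow_lev_le i hi; rw [posn]; omega

open Classical in
theorem haar_eq (i : ℕ) (hi : 1 ≤ i) (t : ℝ) :
    haar i t = if pa i < t ∧ t ≤ pm i then 1
      else if pm i < t ∧ t ≤ pb i then -1 else 0 := by
  rw [haar, if_neg (by omega)]
  have h1 : (((i - 2 ^ Nat.log2 i : ℕ):ℝ)) = (posn i : ℝ) := by rw [posn, lev]
  simp only [pa, pm, pb, lev, h1]
  exact if_congr Iff.rfl rfl (if_congr Iff.rfl rfl rfl)

theorem dl_pos (i : ℕ) : 0 < dl i := by rw [dl]; positivity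

theorem pm_eq (i : ℕ) : pm i = pa i + dl i := by
  rw [pm, pa, dl]; push_cast; field_simp; ring

theorem pb_eq (i : ℕ) : pb i = pm i + dl i := by
  rw [pm, pb, dl]; push_cast; field_simp; ring

theorem pa_nonneg (i : ℕ) : 0 ≤ pa i := by rw [pa]; positivity

theorem pb_le_one (i : ℕ) (hi : 1 ≤ i) : pb i ≤ 1 := by
  rw [pb]
  rw [div_le_one (by positivity)]
  have := posn_lt i hi
  push_cast
  norm_num
  exact_mod_cast this

theorem pa_lt_pm (i : ℕ) : pa i < pm i := by rw [pm_eq]; linarith [dl_pos i]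
theorem pm_lt_pb (i : ℕ) : pm i < pb i := by rw [pb_eq]; linarith [dl_pos i]
theorem pa_lt_pb (i : ℕ) : pa i < pb i := lt_trans (pa_lt_pm i) (pm_lt_pb i)

theorem haar_pos_iff (i : ℕ) (hi : 1 ≤ i) (t : ℝ) :
    haar i t = 1 ↔ (pa i < t ∧ t ≤ pm i) := by
  rw [haar_eq i hi]
  split_ifs with h1 h2
  · simp [h1]
  · exact ⟨fun h => by norm_num at h, fun h => absurd h h1⟩
  · exact ⟨fun h => by norm_num at h, fun h => absurd h h1⟩

theorem haar_neg_iff (i : ℕ) (hi : 1 ≤ i) (t : ℝ) :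
    haar i t = -1 ↔ (pm i < t ∧ t ≤ pb i) := by
  rw [haar_eq i hi]
  split_ifs with h1 h2
  · constructor
    · intro h; norm_num at h
    · rintro ⟨h2, -⟩; exfalso; exact absurd h1.2 (not_le.2 h2)
  · simp [h2]
  · simpa using h2

theorem haar_zero_of (i : ℕ) (hi : 1 ≤ i) (t : ℝ) (h : t ≤ pa i ∨ pb i < t) :
    haar i t = 0 := by
  rw [haar_eq i hi]
  rw [if_neg, if_neg]
  · rcases h with h | h
    · rintro ⟨h1, h2⟩; linarith [pa_lt_pm i]
    · rintro ⟨h1, h2⟩; linarith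
  · rcases h with h | h
    · rintro ⟨h1, h2⟩; linarith
    · rintro ⟨h1, h2⟩; linarith [pm_lt_pb i]

open Classical in
/-- The reflection as a point map. -/
def ref (i : ℕ) (t : ℝ) : ℝ :=
  if pa i < t ∧ t ≤ pm i then t + dl i
  else if pm i < t ∧ t ≤ pb i then t - dl i
  else t

theorem gmap_eq_ref (i : ℕ) (hi : 1 ≤ i) (f : ℝ → ℝ) (t : ℝ) :
    gmap i f t = f (ref i t) := by
  rw [gmap, ref]
  have hd : (1:ℝ) / 2 ^ (Nat.log2 i + 1) = dl i := rfl
  by_cases h1 : pa i < t ∧ t ≤ pm i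
  · rw [if_pos ((haar_pos_iff i hi t).2 h1), if_pos h1, hd]
  · rw [if_neg fun c => h1 ((haar_pos_iff i hi t).1 c), if_neg h1]
    by_cases h2 : pm i < t ∧ t ≤ pb i
    · rw [if_pos ((haar_neg_iff i hi t).2 h2), if_pos h2, hd]
    · rw [if_neg fun c => h2 ((haar_neg_iff i hi t).1 c), if_neg h2]

theorem ref_left (i : ℕ) (t : ℝ) (h : pa i < t ∧ t ≤ pm i) : ref i t = t + dl i := by
  rw [ref, if_pos h]

theorem ref_right (i : ℕ) (t : ℝ) (h : pm i < t ∧ t ≤ pb i) : ref i t = t - dl i := by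
  rw [ref, if_neg, if_pos h]; rintro ⟨h1, h2⟩; linarith

theorem ref_out (i : ℕ) (t : ℝ) (h : t ≤ pa i ∨ pb i < t) : ref i t = t := by
  rw [ref, if_neg, if_neg]
  · rcases h with h | h
    · rintro ⟨h1, h2⟩; linarith [pa_lt_pm i]
    · rintro ⟨h1, h2⟩; linarith
  · rcases h with h | h
    · rintro ⟨h1, h2⟩; linarith
    · rintro ⟨h1, h2⟩; linarith [pm_lt_pb i]

theorem ref_invol (i : ℕ) (t : ℝ) : ref i (ref i t) = t := by
  by_cases h1 : pa i < t ∧ t ≤ pm i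
  · rw [ref_left i t h1, ref_right i _ ⟨by rw [pm_eq]; linarith [h1.1], by rw [pb_eq]; linarith [h1.2]⟩]
    ring
  · by_cases h2 : pm i < t ∧ t ≤ pb i
    · rw [ref_right i t h2, ref_left i _ ⟨by have := pm_eq i; linarith [h2.1], by have := pm_eq i; have := pb_eq i; linarith [h2.2]⟩]
      ring
    · have h : t ≤ pa i ∨ pb i < t := by
        by_contra hc
        push_neg at hc
        rcases le_or_gt t (pm i) with h' | h'
        · exact h1 ⟨hc.1, h'⟩
        · exact h2 ⟨h', hc.2⟩
      rw [ref_out i t h, ref_out i t h]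

theorem ref_mem (i : ℕ) (t : ℝ) (h : pa i < t ∧ t ≤ pb i) :
    pa i < ref i t ∧ ref i t ≤ pb i := by
  by_cases h1 : t ≤ pm i
  · rw [ref_left i t ⟨h.1, h1⟩]
    constructor
    · linarith [dl_pos i, h.1]
    · rw [pb_eq]; linarith
  · rw [ref_right i t ⟨lt_of_not_ge h1, h.2⟩]
    constructor
    · rw [pm_eq] at h1; linarith [lt_of_not_ge h1]
    · linarith [dl_pos i, h.2]

end
end Stmt11

namespace Stmt11
noncomputable section
open Set

def sig (i j : ℕ) : ℕ :=
  if lev i < lev j ∧ posn j / 2 ^ (lev j - lev i) = posn i then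
    if posn j / 2 ^ (lev j - lev i - 1) % 2 = 0 then j + 2 ^ (lev j - lev i - 1)
    else j - 2 ^ (lev j - lev i - 1)
  else j

theorem sig_eq_self (i j : ℕ) (h : ¬ lev i < lev j) : sig i j = j := by
  rw [sig, if_neg]; tauto

/-- common denominator representation -/
theorem scale (u l L : ℕ) (h : l ≤ L) : ((u:ℝ))/2^l = ((u * 2^(L-l) : ℕ) : ℝ)/2^L := by
  have h2 : (2:ℝ)^L = 2^(L-l) * 2^l := by rw [← pow_add]; congr 1; omega
  push_cast
  rw [h2]
  field_simp

theorem div_le_div_nat (u v L : ℕ) (h : u ≤ v) :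
    ((u:ℕ):ℝ)/2^L ≤ ((v:ℕ):ℝ)/2^L := by
  have : ((u:ℕ):ℝ) ≤ ((v:ℕ):ℝ) := by exact_mod_cast h
  apply div_le_div_of_nonneg_right this (by positivity)

theorem pa_scale (i L : ℕ) (h : lev i ≤ L) :
    pa i = ((posn i * 2^(L - lev i) : ℕ) : ℝ)/2^L := by
  rw [pa, scale _ _ L h]

theorem pb_scale (i L : ℕ) (h : lev i ≤ L) :
    pb i = (((posn i + 1) * 2^(L - lev i) : ℕ) : ℝ)/2^L := by
  rw [pb]
  rw [show ((posn i : ℝ) + 1) = (((posn i + 1 : ℕ)):ℝ) by push_cast; ring]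
  rw [scale _ _ L h]

theorem pm_scale (i L : ℕ) (h : lev i < L) :
    pm i = (((2 * posn i + 1) * 2^(L - lev i - 1) : ℕ) : ℝ)/2^L := by
  rw [pm]
  rw [show ((2 * (posn i:ℝ) + 1)) = (((2 * posn i + 1 : ℕ)):ℝ) by push_cast; ring]
  rw [scale _ _ L (by omega), Nat.sub_sub]

theorem dl_scale (i L : ℕ) (h : lev i < L) :
    dl i = (((2^(L - lev i - 1) : ℕ)) : ℝ)/2^L := by
  rw [dl]
  rw [show ((1:ℝ)) = (((1:ℕ)):ℝ) by norm_num]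
  rw [scale _ _ L (by omega), Nat.sub_sub]
  norm_num

end
end Stmt11

namespace Stmt11
noncomputable section
open Set

theorem nat_div_bounds (q d : ℕ) (hd : 0 < d) : d * (q / d) ≤ q ∧ q < d * (q / d) + d := by
  have h1 := Nat.div_add_mod q d
  have h2 := Nat.mod_lt q hd
  omega

set_option maxHeartbeats 2000000 in
theorem sig_cases (i j : ℕ) (hi : 1 ≤ i) (hj : 1 ≤ j) (hl : lev i < lev j) :
    (sig i j = j ∧ (pb j ≤ pa i ∨ pb i ≤ pa j))
  ∨ (1 ≤ sig i j ∧ lev (sig i j) = lev j ∧ sig i (sig i j) = j ∧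
      ((pa i ≤ pa j ∧ pb j ≤ pm i ∧
        pa (sig i j) = pa j + dl i ∧ pm (sig i j) = pm j + dl i ∧ pb (sig i j) = pb j + dl i) ∨
       (pm i ≤ pa j ∧ pb j ≤ pb i ∧
        pa (sig i j) = pa j - dl i ∧ pm (sig i j) = pm j - dl i ∧ pb (sig i j) = pb j - dl i))) := by
  have he : 1 ≤ lev j - lev i := by omega
  have h2e : 2 ^ (lev j - lev i - 1) * 2 = 2 ^ (lev j - lev i) := by
    rw [← pow_succ]; congr 1; omega
  have hpowe : 2 ^ (lev j - lev i) * 2 ^ lev i = 2 ^ lev j := by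
    rw [← pow_add]; congr 1; omega
  have hp := posn_lt i hi
  have hq := posn_lt j hj
  have hje := i_eq j hj
  have hcm1 : 2 ^ (lev j - lev i) * posn i = posn i * 2 ^ (lev j - lev i) := Nat.mul_comm _ _
  have hcm2 : 2 ^ (lev j - lev i) * (posn i + 1) = (posn i + 1) * 2 ^ (lev j - lev i) :=
    Nat.mul_comm _ _
  have hmono : 2 ^ (lev j - lev i) * (posn i + 1) ≤ 2 ^ lev j := by
    calc 2 ^ (lev j - lev i) * (posn i + 1) ≤ 2 ^ (lev j - lev i) * 2 ^ lev i :=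
          Nat.mul_le_mul_left _ (by omega)
      _ = 2 ^ lev j := hpowe
  by_cases hnest : posn j / 2 ^ (lev j - lev i) = posn i
  · -- nested
    right
    have hb := nat_div_bounds (posn j) (2 ^ (lev j - lev i)) (by positivity)
    rw [hnest] at hb
    have hq1 := nat_div_bounds (posn j) (2 ^ (lev j - lev i - 1)) (by positivity)
    have hq2 : posn j / 2 ^ (lev j - lev i - 1) / 2 = posn i := by
      rw [Nat.div_div_eq_div_mul, h2e, hnest]
    have hm := nat_div_bounds (posn j / 2 ^ (lev j - lev i - 1)) 2 (by norm_num)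
    rw [hq2] at hm
    have hexp : lev j + 1 - lev i - 1 = lev j - lev i := by omega
    have hcast2e : ((2:ℝ)) ^ (lev j - lev i) = 2 ^ (lev j - lev i - 1) * 2 := by
      exact_mod_cast congrArg (Nat.cast (R := ℝ)) h2e.symm
    have hcases : posn j / 2 ^ (lev j - lev i - 1) = 2 * posn i ∨
        posn j / 2 ^ (lev j - lev i - 1) = 2 * posn i + 1 := by omega
    rcases hcases with hc | hc
    · -- first half : sig i j = j + 2^(e-1)
      rw [hc] at hq1
      have hA : 2 ^ (lev j - lev i - 1) * (2 * posn i) = 2 ^ (lev j - lev i) * posn i := by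
        rw [← h2e]; ring
      have hB : (2 * posn i + 1) * 2 ^ (lev j - lev i - 1) =
          2 ^ (lev j - lev i - 1) * (2 * posn i) + 2 ^ (lev j - lev i - 1) := by ring
      have hC : posn i * 2 ^ (lev j - lev i) = 2 ^ (lev j - lev i) * posn i := by ring
      have hD : (posn i + 1) * 2 ^ (lev j - lev i) =
          2 ^ (lev j - lev i) * posn i + 2 ^ (lev j - lev i) := by ring
      have hE : (2 * posn i + 1 + 1) * 2 ^ (lev j - lev i - 1) =
          2 ^ (lev j - lev i) * posn i + 2 ^ (lev j - lev i) := by rw [← h2e]; ring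
      have hF : 2 ^ (lev j - lev i) * (posn i + 1) =
          2 ^ (lev j - lev i) * posn i + 2 ^ (lev j - lev i) := by ring
      have hsig : sig i j = j + 2 ^ (lev j - lev i - 1) := by
        rw [sig, if_pos ⟨hl, hnest⟩, if_pos (by rw [hc]; omega)]
      have hfact : 2 ^ (lev j - lev i - 1) * (2 * posn i) + 2 ^ (lev j - lev i - 1) * 2 =
          2 ^ (lev j - lev i) * (posn i + 1) := by
        rw [← h2e]; ring
      have hlevs : lev (sig i j) = lev j := by
        rw [hsig]
        apply lev_eq
        · omega
        · have : 2 ^ (lev j + 1) = 2 ^ lev j + 2 ^ lev j := by ring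
          omega
      have hposs : posn (sig i j) = posn j + 2 ^ (lev j - lev i - 1) := by
        rw [posn, hlevs, hsig]; omega
      have hsigpos : 1 ≤ sig i j := by rw [hsig]; omega
      have hdiv1 : (posn j + 2 ^ (lev j - lev i - 1)) / 2 ^ (lev j - lev i) = posn i := by
        apply Nat.div_eq_of_lt_le <;> omega
      have hdiv2 : (posn j + 2 ^ (lev j - lev i - 1)) / 2 ^ (lev j - lev i - 1)
          = 2 * posn i + 1 := by
        apply Nat.div_eq_of_lt_le <;> omega
      have hss : sig i (sig i j) = j := by
        have c1 : lev i < lev (sig i j) ∧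
            posn (sig i j) / 2 ^ (lev (sig i j) - lev i) = posn i := by
          rw [hlevs, hposs]; exact ⟨hl, hdiv1⟩
        have c2 : ¬ posn (sig i j) / 2 ^ (lev (sig i j) - lev i - 1) % 2 = 0 := by
          rw [hlevs, hposs, hdiv2]; omega
        rw [sig, if_pos c1, if_neg c2, hlevs, hsig]
        omega
      refine ⟨hsigpos, hlevs, hss, Or.inl ⟨?_, ?_, ?_, ?_, ?_⟩⟩
      · rw [pa_scale i (lev j) (by omega), pa_scale j (lev j) le_rfl, Nat.sub_self, pow_zero,
          mul_one]
        exact div_le_div_nat _ _ _ (by omega)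
      · rw [pb_scale j (lev j) le_rfl, pm_scale i (lev j) hl, Nat.sub_self, pow_zero, mul_one]
        exact div_le_div_nat _ _ _ (by omega)
      · rw [pa, pa, hposs, hlevs, dl_scale i (lev j) hl]
        push_cast
        ring
      · rw [pm, pm, hposs, hlevs, dl_scale i (lev j + 1) (by omega), hexp]
        push_cast
        rw [hcast2e]
        push_cast
        ring
      · rw [pb, pb, hposs, hlevs, dl_scale i (lev j) hl]
        push_cast
        ring
    · -- second half : sig i j = j - 2^(e-1)
      rw [hc] at hq1
      have hA : 2 ^ (lev j - lev i - 1) * (2 * posn i + 1) =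
          2 ^ (lev j - lev i) * posn i + 2 ^ (lev j - lev i - 1) := by rw [← h2e]; ring
      have hB : (2 * posn i + 1) * 2 ^ (lev j - lev i - 1) =
          2 ^ (lev j - lev i) * posn i + 2 ^ (lev j - lev i - 1) := by rw [← h2e]; ring
      have hC : posn i * 2 ^ (lev j - lev i) = 2 ^ (lev j - lev i) * posn i := by ring
      have hD : (posn i + 1) * 2 ^ (lev j - lev i) =
          2 ^ (lev j - lev i) * posn i + 2 ^ (lev j - lev i) := by ring
      have hE : (2 * posn i) * 2 ^ (lev j - lev i - 1) = 2 ^ (lev j - lev i) * posn i := by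
        rw [← h2e]; ring
      have hE2 : (2 * posn i + 1) * 2 ^ (lev j - lev i - 1) =
          2 ^ (lev j - lev i) * posn i + 2 ^ (lev j - lev i - 1) := by rw [← h2e]; ring
      have hF : 2 ^ (lev j - lev i) * (posn i + 1) =
          2 ^ (lev j - lev i) * posn i + 2 ^ (lev j - lev i) := by ring
      have hsig : sig i j = j - 2 ^ (lev j - lev i - 1) := by
        rw [sig, if_pos ⟨hl, hnest⟩, if_neg (by rw [hc]; omega)]
      have hfact : 2 ^ (lev j - lev i - 1) * (2 * posn i + 1) + 2 ^ (lev j - lev i - 1) =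
          2 ^ (lev j - lev i) * (posn i + 1) := by
        rw [← h2e]; ring
      have hdle : 2 ^ (lev j - lev i - 1) ≤ posn j := by omega
      have hlevs : lev (sig i j) = lev j := by
        rw [hsig]
        apply lev_eq
        · omega
        · have : 2 ^ (lev j + 1) = 2 ^ lev j + 2 ^ lev j := by ring
          omega
      have hposs : posn (sig i j) = posn j - 2 ^ (lev j - lev i - 1) := by
        rw [posn, hlevs, hsig]; omega
      have hsigpos : 1 ≤ sig i j := by rw [hsig]; omega
      have hdiv1 : (posn j - 2 ^ (lev j - lev i - 1)) / 2 ^ (lev j - lev i) = posn i := by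
        apply Nat.div_eq_of_lt_le <;> omega
      have hdiv2 : (posn j - 2 ^ (lev j - lev i - 1)) / 2 ^ (lev j - lev i - 1)
          = 2 * posn i := by
        apply Nat.div_eq_of_lt_le <;> omega
      have hss : sig i (sig i j) = j := by
        have c1 : lev i < lev (sig i j) ∧
            posn (sig i j) / 2 ^ (lev (sig i j) - lev i) = posn i := by
          rw [hlevs, hposs]; exact ⟨hl, hdiv1⟩
        have c2 : posn (sig i j) / 2 ^ (lev (sig i j) - lev i - 1) % 2 = 0 := by
          rw [hlevs, hposs, hdiv2]; omega
        rw [sig, if_pos c1, if_pos c2, hlevs, hsig]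
        omega
      refine ⟨hsigpos, hlevs, hss, Or.inr ⟨?_, ?_, ?_, ?_, ?_⟩⟩
      · rw [pa_scale j (lev j) le_rfl, pm_scale i (lev j) hl, Nat.sub_self, pow_zero, mul_one]
        exact div_le_div_nat _ _ _ (by omega)
      · rw [pb_scale j (lev j) le_rfl, pb_scale i (lev j) (by omega), Nat.sub_self, pow_zero,
          mul_one]
        exact div_le_div_nat _ _ _ (by omega)
      · rw [pa, pa, hposs, hlevs, dl_scale i (lev j) hl]
        push_cast [hdle]
        ring
      · rw [pm, pm, hposs, hlevs, dl_scale i (lev j + 1) (by omega), hexp]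
        push_cast [hdle]
        rw [hcast2e]
        push_cast
        ring
      · rw [pb, pb, hposs, hlevs, dl_scale i (lev j) hl]
        push_cast [hdle]
        ring
  · -- disjoint
    left
    have hsig : sig i j = j := by rw [sig, if_neg (by tauto)]
    refine ⟨hsig, ?_⟩
    have hb := nat_div_bounds (posn j) (2 ^ (lev j - lev i)) (by positivity)
    rcases Nat.lt_or_ge (posn j / 2 ^ (lev j - lev i)) (posn i) with hlt | hge
    · left
      have hmul : 2 ^ (lev j - lev i) * (posn j / 2 ^ (lev j - lev i) + 1)
          ≤ 2 ^ (lev j - lev i) * posn i := Nat.mul_le_mul_left _ (by omega)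
      rw [Nat.mul_add, Nat.mul_one] at hmul
      rw [pb_scale j (lev j) le_rfl, pa_scale i (lev j) (by omega), Nat.sub_self, pow_zero,
        mul_one]
      exact div_le_div_nat _ _ _ (by omega)
    · right
      have hgt : posn i < posn j / 2 ^ (lev j - lev i) := by omega
      have hmul : 2 ^ (lev j - lev i) * (posn i + 1)
          ≤ 2 ^ (lev j - lev i) * (posn j / 2 ^ (lev j - lev i)) :=
        Nat.mul_le_mul_left _ (by omega)
      rw [pb_scale i (lev j) (by omega), pa_scale j (lev j) le_rfl, Nat.sub_self, pow_zero,
        mul_one]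
      exact div_le_div_nat _ _ _ (by omega)

end
end Stmt11

namespace Stmt11
noncomputable section
open Set

theorem nat_cast_add_one (u : ℕ) : ((u:ℝ) + 1) = ((u + 1 : ℕ) : ℝ) := by push_cast; ring

theorem same_level_disjoint (i j : ℕ) (hi : 1 ≤ i) (hj : 1 ≤ j) (hlev : lev i = lev j)
    (hne : i ≠ j) : pb j ≤ pa i ∨ pb i ≤ pa j := by
  have hpq : posn i ≠ posn j := by
    intro h
    apply hne
    rw [i_eq i hi, i_eq j hj, hlev, h]
  rcases Nat.lt_or_ge (posn j) (posn i) with h | h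
  · left
    rw [pb, pa, hlev, nat_cast_add_one]
    exact div_le_div_nat _ _ _ (by omega)
  · right
    rw [pb, pa, hlev, nat_cast_add_one]
    exact div_le_div_nat _ _ _ (by omega)

theorem no_dyadic_between (L P u : ℕ) (h1 : (P:ℝ)/2^L < (u:ℝ)/2^L)
    (h2 : ((u:ℝ))/2^L < ((P:ℝ)+1)/2^L) : False := by
  have hpos : (0:ℝ) < 2^L := by positivity
  rw [div_lt_div_iff₀ hpos hpos] at h1 h2
  have hA : (P:ℝ) < (u:ℝ) := lt_of_mul_lt_mul_right h1 (le_of_lt hpos)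
  have hB : (u:ℝ) < (P:ℝ) + 1 := lt_of_mul_lt_mul_right h2 (le_of_lt hpos)
  have : P < u := by exact_mod_cast hA
  have : u < P + 1 := by exact_mod_cast hB
  omega

theorem dyadic_sep (L P u : ℕ) (s t : ℝ)
    (hs1 : (P:ℝ)/2^L < s) (hs2 : s ≤ ((P:ℝ)+1)/2^L)
    (ht1 : (P:ℝ)/2^L < t) (ht2 : t ≤ ((P:ℝ)+1)/2^L) :
    ((u:ℝ)/2^L < s ↔ (u:ℝ)/2^L < t) := by
  constructor
  · intro h
    by_contra hc
    push_neg at hc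
    exact no_dyadic_between L P u (lt_of_lt_of_le ht1 hc) (lt_of_lt_of_le h hs2)
  · intro h
    by_contra hc
    push_neg at hc
    exact no_dyadic_between L P u (lt_of_lt_of_le hs1 hc) (lt_of_lt_of_le h ht2)

theorem haar_const (j i : ℕ) (hj : 1 ≤ j) (hi : 1 ≤ i) (hl : lev j < lev i) (s t : ℝ)
    (hs : pa i < s ∧ s ≤ pb i) (ht : pa i < t ∧ t ≤ pb i) : haar j s = haar j t := by
  have hpaj := pa_scale j (lev i) (by omega)
  have hpmj := pm_scale j (lev i) hl
  have hpbj := pb_scale j (lev i) (by omega)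
  have hpai : pa i = ((posn i : ℕ):ℝ)/2^(lev i) := by rw [pa]
  have hpbi : pb i = (((posn i : ℕ):ℝ)+1)/2^(lev i) := by rw [pb]
  rw [hpai] at hs ht
  rw [hpbi] at hs ht
  have sep : ∀ u : ℕ, ((u:ℝ)/2^(lev i) < s ↔ (u:ℝ)/2^(lev i) < t) := fun u =>
    dyadic_sep (lev i) (posn i) u s t hs.1 hs.2 ht.1 ht.2
  have sep' : ∀ u : ℕ, (s ≤ (u:ℝ)/2^(lev i) ↔ t ≤ (u:ℝ)/2^(lev i)) := by
    intro u
    rw [← not_lt, ← not_lt]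
    exact not_congr (sep u)
  rw [haar_eq j hj s, haar_eq j hj t]
  rw [hpaj, hpmj, hpbj]
  exact if_congr (and_congr (sep _) (sep' _)) rfl
    (if_congr (and_congr (sep _) (sep' _)) rfl rfl)

/-- haar is determined by its endpoints, so shifting endpoints shifts the function. -/
theorem haar_shift (σ m : ℕ) (hσ : 1 ≤ σ) (hm : 1 ≤ m) (c : ℝ)
    (h1 : pa σ = pa m + c) (h2 : pm σ = pm m + c) (h3 : pb σ = pb m + c) :
    ∀ s, haar σ s = haar m (s - c) := by
  intro s
  rw [haar_eq σ hσ, haar_eq m hm, h1, h2, h3]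
  exact if_congr (and_congr (by constructor <;> intro <;> linarith)
      (by constructor <;> intro <;> linarith)) rfl
    (if_congr (and_congr (by constructor <;> intro <;> linarith)
      (by constructor <;> intro <;> linarith)) rfl rfl)

theorem ref_shift (σ m : ℕ) (hlev : lev σ = lev m) (c : ℝ)
    (h1 : pa σ = pa m + c) (h2 : pm σ = pm m + c) (h3 : pb σ = pb m + c) :
    ∀ s, ref σ (s + c) = ref m s + c := by
  intro s
  have hdl : dl σ = dl m := by rw [dl, dl, hlev]
  by_cases hc1 : pa m < s ∧ s ≤ pm m
  · rw [ref_left m s hc1, ref_left σ (s + c) ⟨by linarith [hc1.1], by linarith [hc1.2]⟩, hdl]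
    ring
  · by_cases hc2 : pm m < s ∧ s ≤ pb m
    · rw [ref_right m s hc2, ref_right σ (s + c) ⟨by linarith [hc2.1], by linarith [hc2.2]⟩, hdl]
      ring
    · have hout : s ≤ pa m ∨ pb m < s := by
        by_contra hcc
        push_neg at hcc
        rcases le_or_gt s (pm m) with h' | h'
        · exact hc1 ⟨hcc.1, h'⟩
        · exact hc2 ⟨h', hcc.2⟩
      rw [ref_out m s hout, ref_out σ (s + c) (hout.imp (fun h => by linarith) (fun h => by linarith))]

end
end Stmt11

namespace Stmt11
noncomputable section
open Set

theorem out_of_not (i : ℕ) (t : ℝ) (h : ¬(pa i < t ∧ t ≤ pb i)) : t ≤ pa i ∨ pb i < t := by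
  rcases le_or_gt t (pa i) with h' | h'
  · exact Or.inl h'
  · right; by_contra hc; push_neg at hc; exact h ⟨h', hc⟩

theorem lev_zero : lev 0 = 0 := by rw [lev, Nat.log2_eq_log_two]; simp

theorem sig_zero (i : ℕ) : sig i 0 = 0 :=
  sig_eq_self i 0 (by rw [lev_zero]; omega)

theorem haar0_eq (t : ℝ) : haar 0 t = if 0 < t ∧ t ≤ 1 then 1 else 0 := by
  rw [haar, if_pos rfl]

theorem haar_shift_neg (σ j : ℕ) (hσ : 1 ≤ σ) (hj : 1 ≤ j) (c : ℝ)
    (h1 : pa σ = pa j - c) (h2 : pm σ = pm j - c) (h3 : pb σ = pb j - c) :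
    ∀ s, haar σ s = haar j (s + c) := by
  intro s
  rw [haar_eq σ hσ, haar_eq j hj, h1, h2, h3]
  exact if_congr (and_congr (by constructor <;> intro <;> linarith)
      (by constructor <;> intro <;> linarith)) rfl
    (if_congr (and_congr (by constructor <;> intro <;> linarith)
      (by constructor <;> intro <;> linarith)) rfl rfl)

theorem haar_zero_on (i j : ℕ) (hj : 1 ≤ j) (hdis : pb j ≤ pa i ∨ pb i ≤ pa j)
    (s : ℝ) (hs : pa i < s ∧ s ≤ pb i) : haar j s = 0 := by
  apply haar_zero_of j hj
  rcases hdis with h | h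
  · exact Or.inr (lt_of_le_of_lt h hs.1)
  · exact Or.inl (le_trans hs.2 h)

theorem ref_eq_of_disjoint (i j : ℕ) (hi : 1 ≤ i) (hj : 1 ≤ j)
    (hdis : pb j ≤ pa i ∨ pb i ≤ pa j) (t : ℝ) : haar j (ref i t) = haar j t := by
  by_cases hin : pa i < t ∧ t ≤ pb i
  · rw [haar_zero_on i j hj hdis _ (ref_mem i t hin), haar_zero_on i j hj hdis _ hin]
  · rw [ref_out i t (out_of_not i t hin)]

theorem gmap_haar_self (i : ℕ) (hi : 1 ≤ i) : gmap i (haar i) = -haar i := by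
  funext t
  rw [Pi.neg_apply, gmap_eq_ref i hi]
  have hpm := pm_eq i
  have hpb := pb_eq i
  have hdl := dl_pos i
  by_cases h1 : pa i < t ∧ t ≤ pm i
  · rw [ref_left i t h1, (haar_pos_iff i hi t).2 h1,
      (haar_neg_iff i hi _).2 ⟨by linarith [h1.1], by linarith [h1.2]⟩]
  · by_cases h2 : pm i < t ∧ t ≤ pb i
    · rw [ref_right i t h2, (haar_neg_iff i hi t).2 h2,
        (haar_pos_iff i hi _).2 ⟨by linarith [h2.1], by linarith [h2.2]⟩]
      norm_num
    · have hout : t ≤ pa i ∨ pb i < t := by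
        rcases le_or_gt t (pa i) with h' | h'
        · exact Or.inl h'
        · right; by_contra hc; push_neg at hc
          rcases le_or_gt t (pm i) with h'' | h''
          · exact h1 ⟨h', h''⟩
          · exact h2 ⟨h'', hc⟩
      rw [ref_out i t hout, haar_zero_of i hi t hout]
      norm_num

theorem gmap_haar (i j : ℕ) (hi : 1 ≤ i) (hne : j ≠ i) :
    gmap i (haar j) = haar (sig i j) := by
  funext t
  rw [gmap_eq_ref i hi]
  by_cases hj0 : j = 0
  · subst hj0
    rw [sig_zero]
    by_cases hin : pa i < t ∧ t ≤ pb i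
    · have h1 := ref_mem i t hin
      rw [haar0_eq, haar0_eq,
        if_pos ⟨lt_of_le_of_lt (pa_nonneg i) h1.1, le_trans h1.2 (pb_le_one i hi)⟩,
        if_pos ⟨lt_of_le_of_lt (pa_nonneg i) hin.1, le_trans hin.2 (pb_le_one i hi)⟩]
    · rw [ref_out i t (out_of_not i t hin)]
  have hj : 1 ≤ j := by omega
  have hpm := pm_eq i
  have hpb := pb_eq i
  have hdl := dl_pos i
  rcases Nat.lt_trichotomy (lev i) (lev j) with hl | hl | hl
  · rcases sig_cases i j hi hj hl with ⟨hsig, hdisj⟩ | ⟨hσ1, hσlev, hσσ, hcase⟩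
    · rw [hsig]
      exact ref_eq_of_disjoint i j hi hj hdisj t
    · rcases hcase with ⟨hq1, hq2, ha, hm, hb⟩ | ⟨hq1, hq2, ha, hm, hb⟩
      · -- j in first half of i
        have hshift := haar_shift (sig i j) j hσ1 hj (dl i) ha hm hb
        rw [hshift t]
        by_cases c1 : pa i < t ∧ t ≤ pm i
        · rw [ref_left i t c1,
            haar_zero_of j hj _ (Or.inr (by linarith [c1.1])),
            haar_zero_of j hj _ (Or.inl (by linarith [c1.2]))]
        · by_cases c2 : pm i < t ∧ t ≤ pb i
          · rw [ref_right i t c2]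
          · have hout : t ≤ pa i ∨ pb i < t := by
              rcases le_or_gt t (pa i) with h' | h'
              · exact Or.inl h'
              · right; by_contra hc; push_neg at hc
                rcases le_or_gt t (pm i) with h'' | h''
                · exact c1 ⟨h', h''⟩
                · exact c2 ⟨h'', hc⟩
            rw [ref_out i t hout]
            rcases hout with h | h
            · rw [haar_zero_of j hj t (Or.inl (by linarith)),
                haar_zero_of j hj _ (Or.inl (by linarith))]
            · rw [haar_zero_of j hj t (Or.inr (by linarith)),
                haar_zero_of j hj _ (Or.inr (by linarith))]
      · -- j in second half of i
        have hshift := haar_shift_neg (sig i j) j hσ1 hj (dl i)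
          (by rw [ha]) (by rw [hm]) (by rw [hb])
        rw [hshift t]
        by_cases c1 : pa i < t ∧ t ≤ pm i
        · rw [ref_left i t c1]
        · by_cases c2 : pm i < t ∧ t ≤ pb i
          · rw [ref_right i t c2,
              haar_zero_of j hj _ (Or.inl (by linarith [c2.2])),
              haar_zero_of j hj _ (Or.inr (by linarith [c2.1]))]
          · have hout : t ≤ pa i ∨ pb i < t := by
              rcases le_or_gt t (pa i) with h' | h'
              · exact Or.inl h'
              · right; by_contra hc; push_neg at hc
                rcases le_or_gt t (pm i) with h'' | h''
                · exact c1 ⟨h', h''⟩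
                · exact c2 ⟨h'', hc⟩
            rw [ref_out i t hout]
            rcases hout with h | h
            · rw [haar_zero_of j hj t (Or.inl (by linarith)),
                haar_zero_of j hj _ (Or.inl (by linarith))]
            · rw [haar_zero_of j hj t (Or.inr (by linarith)),
                haar_zero_of j hj _ (Or.inr (by linarith))]
  · rw [sig_eq_self i j (by omega)]
    exact ref_eq_of_disjoint i j hi hj
      (same_level_disjoint i j hi hj hl (Ne.symm hne)) t
  · rw [sig_eq_self i j (by omega)]
    by_cases hin : pa i < t ∧ t ≤ pb i
    · exact haar_const j i hj hi hl _ _ (ref_mem i t hin) hin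
    · rw [ref_out i t (out_of_not i t hin)]

end
end Stmt11

namespace Stmt11
noncomputable section
open Set

theorem ref_comm_disjoint (i m : ℕ) (hdis : pb m ≤ pa i ∨ pb i ≤ pa m) (t : ℝ) :
    ref i (ref m t) = ref m (ref i t) := by
  have side_m : ∀ s, pa m < s ∧ s ≤ pb m → ref i s = s := by
    intro s hs
    apply ref_out
    rcases hdis with h | h
    · exact Or.inl (le_trans hs.2 h)
    · exact Or.inr (lt_of_le_of_lt h hs.1)
  have side_i : ∀ s, pa i < s ∧ s ≤ pb i → ref m s = s := by
    intro s hs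
    apply ref_out
    rcases hdis with h | h
    · exact Or.inr (lt_of_le_of_lt h hs.1)
    · exact Or.inl (le_trans hs.2 h)
  by_cases h1 : pa m < t ∧ t ≤ pb m
  · rw [side_m t h1, side_m _ (ref_mem m t h1)]
  · rw [ref_out m t (out_of_not m t h1)]
    by_cases h2 : pa i < t ∧ t ≤ pb i
    · rw [side_i _ (ref_mem i t h2)]
    · rw [ref_out i t (out_of_not i t h2), ref_out m t (out_of_not m t h1)]

theorem ref_comm (i m : ℕ) (hi : 1 ≤ i) (hm : 1 ≤ m) (hne : m ≠ i) (hlev : lev i ≤ lev m)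
    (t : ℝ) : ref i (ref m t) = ref (sig i m) (ref i t) := by
  have hpm := pm_eq i
  have hpb := pb_eq i
  have hdl := dl_pos i
  rcases eq_or_lt_of_le hlev with he | hlt
  · rw [sig_eq_self i m (by omega)]
    exact ref_comm_disjoint i m (same_level_disjoint i m hi hm he (Ne.symm hne)) t
  · rcases sig_cases i m hi hm hlt with ⟨hsig, hdisj⟩ | ⟨hσ1, hσlev, hσσ, hcase⟩
    · rw [hsig]
      exact ref_comm_disjoint i m hdisj t
    · rcases hcase with ⟨hq1, hq2, ha, hmid, hb⟩ | ⟨hq1, hq2, ha, hmid, hb⟩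
      · -- m in first half of i, sig in second half
        have hshift := ref_shift (sig i m) m hσlev (dl i) ha hmid hb
        have hsσ1 : pm i ≤ pa (sig i m) := by rw [ha]; linarith
        have hsσ2 : pb (sig i m) ≤ pb i := by rw [hb]; linarith
        by_cases c1 : pa m < t ∧ t ≤ pb m
        · have hmm := ref_mem m t c1
          rw [ref_left i _ ⟨by linarith [hmm.1], by linarith [hmm.2]⟩,
            ref_left i t ⟨by linarith [c1.1], by linarith [c1.2]⟩, hshift t]
        · by_cases c2 : pa (sig i m) < t ∧ t ≤ pb (sig i m)
          · rw [ref_out m t (Or.inr (by linarith [c2.1]))]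
            rw [ref_right i t ⟨by linarith [c2.1], by linarith [c2.2]⟩]
            rw [ref_out (sig i m) (t - dl i) (Or.inl (by rw [hb] at c2; linarith [c2.2]))]
          · have houtm := out_of_not m t c1
            have houtσ := out_of_not (sig i m) t c2
            rw [ref_out m t houtm]
            by_cases c3 : pa i < t ∧ t ≤ pb i
            · rcases le_or_gt t (pm i) with hfst | hsnd
              · rw [ref_left i t ⟨c3.1, hfst⟩]
                refine (ref_out (sig i m) _ ?_).symm
                rcases houtm with h | h
                · exact Or.inl (by rw [ha]; linarith)
                · exact Or.inr (by rw [hb]; linarith)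
              · rw [ref_right i t ⟨hsnd, c3.2⟩]
                exact (ref_out (sig i m) _ (Or.inl (by linarith [c3.2]))).symm
            · rw [ref_out i t (out_of_not i t c3), ref_out (sig i m) t houtσ]
      · -- m in second half of i, sig in first half
        have hshift := ref_shift m (sig i m) hσlev.symm (dl i)
          (by rw [ha]; ring) (by rw [hmid]; ring) (by rw [hb]; ring)
        have hsσ1 : pa i ≤ pa (sig i m) := by rw [ha]; linarith
        have hsσ2 : pb (sig i m) ≤ pm i := by rw [hb]; linarith
        by_cases c1 : pa m < t ∧ t ≤ pb m
        · have hmm := ref_mem m t c1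
          rw [ref_right i _ ⟨by linarith [hmm.1], by linarith [hmm.2]⟩,
            ref_right i t ⟨by linarith [c1.1], by linarith [c1.2]⟩]
          have := hshift (t - dl i)
          rw [sub_add_cancel] at this
          linarith [this]
        · by_cases c2 : pa (sig i m) < t ∧ t ≤ pb (sig i m)
          · rw [ref_out m t (Or.inl (by linarith [c2.2]))]
            rw [ref_left i t ⟨by linarith [c2.1], by linarith [c2.2]⟩]
            refine (ref_out (sig i m) (t + dl i) (Or.inr (by rw [ha] at c2; linarith [c2.1]))).symm
          · have houtm := out_of_not m t c1
            have houtσ := out_of_not (sig i m) t c2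
            rw [ref_out m t houtm]
            by_cases c3 : pa i < t ∧ t ≤ pb i
            · rcases le_or_gt t (pm i) with hfst | hsnd
              · rw [ref_left i t ⟨c3.1, hfst⟩]
                exact (ref_out (sig i m) _ (Or.inr (by linarith [c3.1]))).symm
              · rw [ref_right i t ⟨hsnd, c3.2⟩]
                refine (ref_out (sig i m) _ ?_).symm
                rcases houtm with h | h
                · exact Or.inl (by rw [ha]; linarith)
                · exact Or.inr (by rw [hb]; linarith)
            · rw [ref_out i t (out_of_not i t c3), ref_out (sig i m) t houtσ]

theorem gmap_gmap (i m : ℕ) (hi : 1 ≤ i) (hm : 1 ≤ m) (hne : m ≠ i) (hlev : lev i ≤ lev m)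
    (f : ℝ → ℝ) : gmap m (gmap i f) = gmap i (gmap (sig i m) f) := by
  have hσ1 : 1 ≤ sig i m := by
    by_cases h : lev i < lev m
    · rcases sig_cases i m hi hm h with ⟨hs, -⟩ | ⟨hs, -⟩
      · omega
      · exact hs
    · rw [sig_eq_self i m h]; exact hm
  funext t
  rw [gmap_eq_ref m hm, gmap_eq_ref i hi, gmap_eq_ref i hi, gmap_eq_ref (sig i m) hσ1]
  rw [ref_comm i m hi hm hne hlev]

theorem gmap_invol (i : ℕ) (hi : 1 ≤ i) (f : ℝ → ℝ) : gmap i (gmap i f) = f := by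
  funext t
  rw [gmap_eq_ref i hi, gmap_eq_ref i hi, ref_invol]

theorem gmap_add (i : ℕ) (f g : ℝ → ℝ) : gmap i (f + g) = gmap i f + gmap i g := by
  funext t
  simp only [gmap, Pi.add_apply]
  split_ifs <;> rfl

theorem gmap_smul (i : ℕ) (c : ℝ) (f : ℝ → ℝ) : gmap i (c • f) = c • gmap i f := by
  funext t
  simp only [gmap, Pi.smul_apply]
  split_ifs <;> rfl

end
end Stmt11

namespace Stmt11
noncomputable section
open Set MeasureTheory

theorem integrableOn_indic (a b : ℝ) :
    IntegrableOn ((Ioc a b).indicator (fun _ => (1:ℝ))) (Ioc (0:ℝ) 1) := by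
  have h1 : IntegrableOn (fun _ => (1:ℝ)) (Ioc (0:ℝ) 1) volume :=
    integrableOn_const measure_Ioc_lt_top.ne
  exact h1.indicator measurableSet_Ioc

theorem integral_indic (a b : ℝ) (h0 : 0 ≤ a) (hab : a ≤ b) (h1 : b ≤ 1) :
    ∫ t in (0:ℝ)..1, (Ioc a b).indicator (fun _ => (1:ℝ)) t = b - a := by
  rw [intervalIntegral.integral_of_le (by norm_num)]
  rw [MeasureTheory.setIntegral_indicator measurableSet_Ioc]
  rw [inter_eq_self_of_subset_right (Ioc_subset_Ioc h0 h1)]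
  rw [MeasureTheory.setIntegral_const]
  rw [measureReal_def, Real.volume_Ioc, smul_eq_mul, mul_one, ENNReal.toReal_ofReal (by linarith)]

theorem haar_indic (i : ℕ) (hi : 1 ≤ i) (t : ℝ) :
    haar i t = (Ioc (pa i) (pm i)).indicator (fun _ => (1:ℝ)) t
      - (Ioc (pm i) (pb i)).indicator (fun _ => (1:ℝ)) t := by
  rw [haar_eq i hi]
  by_cases h1 : pa i < t ∧ t ≤ pm i
  · rw [if_pos h1, indicator_of_mem (mem_Ioc.2 h1), indicator_of_notMem (fun hc => by
      simp only [mem_Ioc] at hc; linarith [h1.2, hc.1])]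
    norm_num
  · rw [if_neg h1, indicator_of_notMem (fun hc => h1 (by simpa [mem_Ioc] using hc))]
    by_cases h2 : pm i < t ∧ t ≤ pb i
    · rw [if_pos h2, indicator_of_mem (mem_Ioc.2 h2)]
      norm_num
    · rw [if_neg h2, indicator_of_notMem (fun hc => h2 (by simpa [mem_Ioc] using hc))]
      norm_num

theorem haar0_indic (t : ℝ) :
    haar 0 t = (Ioc (0:ℝ) 1).indicator (fun _ => (1:ℝ)) t := by
  rw [haar0_eq]
  by_cases h : 0 < t ∧ t ≤ 1
  · rw [if_pos h, indicator_of_mem (mem_Ioc.2 h)]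
  · rw [if_neg h, indicator_of_notMem (fun hc => h (by simpa [mem_Ioc] using hc))]

end
end Stmt11

namespace Stmt11
noncomputable section
open Set MeasureTheory

theorem intInt_indic (a b : ℝ) :
    IntervalIntegrable ((Ioc a b).indicator (fun _ => (1:ℝ))) volume 0 1 := by
  rw [intervalIntegrable_iff_integrableOn_Ioc_of_le (by norm_num)]
  exact integrableOn_indic a b

theorem intInt_haar (i : ℕ) : IntervalIntegrable (haar i) volume 0 1 := by
  rcases Nat.eq_zero_or_pos i with h | h
  · subst h
    have : haar 0 = (Ioc (0:ℝ) 1).indicator (fun _ => (1:ℝ)) := funext haar0_indic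
    rw [this]
    exact intInt_indic 0 1
  · have : haar i = fun t => (Ioc (pa i) (pm i)).indicator (fun _ => (1:ℝ)) t
        - (Ioc (pm i) (pb i)).indicator (fun _ => (1:ℝ)) t := funext (haar_indic i h)
    rw [this]
    exact (intInt_indic _ _).sub (intInt_indic _ _)

theorem integral_haar (i : ℕ) (hi : 1 ≤ i) : ∫ t in (0:ℝ)..1, haar i t = 0 := by
  have h1 : ∫ t in (0:ℝ)..1, haar i t = (∫ t in (0:ℝ)..1,
      (Ioc (pa i) (pm i)).indicator (fun _ => (1:ℝ)) t)
      - ∫ t in (0:ℝ)..1, (Ioc (pm i) (pb i)).indicator (fun _ => (1:ℝ)) t := by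
    rw [← intervalIntegral.integral_sub (intInt_indic _ _) (intInt_indic _ _)]
    exact intervalIntegral.integral_congr (fun t _ => haar_indic i hi t)
  rw [h1, integral_indic _ _ (pa_nonneg i) (le_of_lt (pa_lt_pm i))
      (le_trans (le_of_lt (pm_lt_pb i)) (pb_le_one i hi)),
    integral_indic _ _ (le_trans (pa_nonneg i) (le_of_lt (pa_lt_pm i)))
      (le_of_lt (pm_lt_pb i)) (pb_le_one i hi)]
  have := pm_eq i
  have := pb_eq i
  linarith

theorem haar_sq (i : ℕ) (hi : 1 ≤ i) (t : ℝ) :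
    haar i t * haar i t = (Ioc (pa i) (pb i)).indicator (fun _ => (1:ℝ)) t := by
  rw [haar_eq i hi]
  by_cases h1 : pa i < t ∧ t ≤ pm i
  · rw [if_pos h1, indicator_of_mem (mem_Ioc.2 ⟨h1.1, le_trans h1.2 (le_of_lt (pm_lt_pb i))⟩)]
    norm_num
  · rw [if_neg h1]
    by_cases h2 : pm i < t ∧ t ≤ pb i
    · rw [if_pos h2,
        indicator_of_mem (mem_Ioc.2 ⟨lt_trans (pa_lt_pm i) h2.1, h2.2⟩)]
      norm_num
    · rw [if_neg h2, indicator_of_notMem]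
      · norm_num
      · intro hc
        rw [mem_Ioc] at hc
        rcases le_or_gt t (pm i) with h' | h'
        · exact h1 ⟨hc.1, h'⟩
        · exact h2 ⟨h', hc.2⟩

theorem haar0_sq (t : ℝ) :
    haar 0 t * haar 0 t = (Ioc (0:ℝ) 1).indicator (fun _ => (1:ℝ)) t := by
  rw [haar0_indic]
  by_cases h : t ∈ Ioc (0:ℝ) 1
  · rw [indicator_of_mem h]; norm_num
  · rw [indicator_of_notMem h]; norm_num

theorem L2inner_haar_self (i : ℕ) :
    L2inner (haar i) (haar i) = if i = 0 then 1 else 2 * dl i := by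
  rcases Nat.eq_zero_or_pos i with h | h
  · subst h
    rw [L2inner, if_pos rfl, intervalIntegral.integral_congr (fun t _ => haar0_sq t),
      integral_indic 0 1 le_rfl (by norm_num) le_rfl]
    norm_num
  · rw [L2inner, if_neg (by omega),
      intervalIntegral.integral_congr (fun t _ => haar_sq i h t),
      integral_indic _ _ (pa_nonneg i) (le_of_lt (pa_lt_pb i)) (pb_le_one i h)]
    have := pm_eq i
    have := pb_eq i
    linarith

theorem L2inner_haar_self_pos (i : ℕ) : 0 < L2inner (haar i) (haar i) := by
  rw [L2inner_haar_self]
  split_ifs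
  · norm_num
  · linarith [dl_pos i]

theorem haar_mul_deeper (s d : ℕ) (hd : 1 ≤ d)
    (hcond : s = 0 ∨ (1 ≤ s ∧ lev s < lev d) ∨ (1 ≤ s ∧ lev s = lev d ∧ s ≠ d)) (t : ℝ) :
    haar s t * haar d t = haar s (pm d) * haar d t := by
  by_cases hin : pa d < t ∧ t ≤ pb d
  · have hpmem : pa d < pm d ∧ pm d ≤ pb d := ⟨pa_lt_pm d, le_of_lt (pm_lt_pb d)⟩
    have : haar s t = haar s (pm d) := by
      rcases hcond with h0 | ⟨hs, hlt⟩ | ⟨hs, hlev, hne⟩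
      · subst h0
        rw [haar0_eq, haar0_eq,
          if_pos ⟨lt_of_le_of_lt (pa_nonneg d) hin.1, le_trans hin.2 (pb_le_one d hd)⟩,
          if_pos ⟨lt_of_le_of_lt (pa_nonneg d) hpmem.1, le_trans hpmem.2 (pb_le_one d hd)⟩]
      · exact haar_const s d hs hd hlt t (pm d) hin hpmem
      · have hdis := same_level_disjoint d s hd hs hlev.symm (Ne.symm hne)
        rw [haar_zero_on d s hs hdis t hin, haar_zero_on d s hs hdis (pm d) hpmem]
    rw [this]
  · rw [haar_zero_of d hd t (out_of_not d t hin)]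
    ring

theorem cross_zero (s d : ℕ) (hd : 1 ≤ d)
    (hcond : s = 0 ∨ (1 ≤ s ∧ lev s < lev d) ∨ (1 ≤ s ∧ lev s = lev d ∧ s ≠ d)) :
    ∫ t in (0:ℝ)..1, haar s t * haar d t = 0 := by
  rw [intervalIntegral.integral_congr (fun t _ => haar_mul_deeper s d hd hcond t),
    intervalIntegral.integral_const_mul, integral_haar d hd, mul_zero]

theorem L2inner_haar_ne (i j : ℕ) (hne : i ≠ j) : L2inner (haar i) (haar j) = 0 := by
  have hcomm : L2inner (haar i) (haar j) = L2inner (haar j) (haar i) := by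
    rw [L2inner, L2inner]
    exact intervalIntegral.integral_congr (fun t _ => mul_comm _ _)
  rcases Nat.eq_zero_or_pos i with h0 | hi
  · subst h0
    exact cross_zero 0 j (by omega) (Or.inl rfl)
  · rcases Nat.eq_zero_or_pos j with h0 | hj
    · subst h0
      rw [hcomm]
      exact cross_zero 0 i (by omega) (Or.inl rfl)
    · rcases Nat.lt_trichotomy (lev i) (lev j) with hl | hl | hl
      · exact cross_zero i j hj (Or.inr (Or.inl ⟨hi, hl⟩))
      · exact cross_zero i j hj (Or.inr (Or.inr ⟨hi, hl, hne⟩))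
      · rw [hcomm]
        exact cross_zero j i hi (Or.inr (Or.inl ⟨hj, hl⟩))

theorem intInt_haar_mul (i j : ℕ) :
    IntervalIntegrable (fun t => haar i t * haar j t) volume 0 1 := by
  have key : ∀ s d : ℕ, 1 ≤ d →
      (s = 0 ∨ (1 ≤ s ∧ lev s < lev d) ∨ (1 ≤ s ∧ lev s = lev d ∧ s ≠ d)) →
      IntervalIntegrable (fun t => haar s t * haar d t) volume 0 1 := by
    intro s d hd hcond
    have : (fun t => haar s t * haar d t) = fun t => haar s (pm d) * haar d t :=
      funext (haar_mul_deeper s d hd hcond)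
    rw [this]
    exact (intInt_haar d).const_mul _
  by_cases hij : i = j
  · subst hij
    rcases Nat.eq_zero_or_pos i with h | h
    · subst h
      have : (fun t => haar 0 t * haar 0 t) = (Ioc (0:ℝ) 1).indicator (fun _ => (1:ℝ)) :=
        funext haar0_sq
      rw [this]
      exact intInt_indic 0 1
    · have : (fun t => haar i t * haar i t)
          = (Ioc (pa i) (pb i)).indicator (fun _ => (1:ℝ)) := funext (haar_sq i h)
      rw [this]
      exact intInt_indic _ _
  have hcomm : (fun t => haar i t * haar j t) = (fun t => haar j t * haar i t) :=
    funext (fun t => mul_comm _ _)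
  rcases Nat.eq_zero_or_pos i with h0 | hi
  · subst h0; exact key 0 j (by omega) (Or.inl rfl)
  · rcases Nat.eq_zero_or_pos j with h0 | hj
    · subst h0; rw [hcomm]; exact key 0 i (by omega) (Or.inl rfl)
    · rcases Nat.lt_trichotomy (lev i) (lev j) with hl | hl | hl
      · exact key i j hj (Or.inr (Or.inl ⟨hi, hl⟩))
      · exact key i j hj (Or.inr (Or.inr ⟨hi, hl, hij⟩))
      · rw [hcomm]; exact key j i hi (Or.inr (Or.inl ⟨hj, hl⟩))

end
end Stmt11

namespace Stmt11
noncomputable section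
open Set MeasureTheory

theorem lev_mono {i m : ℕ} (h : i ≤ m) : lev i ≤ lev m := by
  rw [lev, lev, Nat.log2_eq_log_two, Nat.log2_eq_log_two]
  exact Nat.log_mono_right h

theorem sig_lev (w j : ℕ) (hw : 1 ≤ w) : lev (sig w j) = lev j := by
  rcases Nat.eq_zero_or_pos j with h | hj
  · subst h; rw [sig_zero]
  by_cases h : lev w < lev j
  · rcases sig_cases w j hw hj h with ⟨hs, -⟩ | ⟨-, hs, -⟩
    · rw [hs]
    · exact hs
  · rw [sig_eq_self w j h]

theorem sig_pos (w j : ℕ) (hw : 1 ≤ w) (hj : 1 ≤ j) : 1 ≤ sig w j := by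
  by_cases h : lev w < lev j
  · rcases sig_cases w j hw hj h with ⟨hs, -⟩ | ⟨hs, -⟩
    · omega
    · exact hs
  · rw [sig_eq_self w j h]; exact hj

theorem sig_invol (w j : ℕ) (hw : 1 ≤ w) : sig w (sig w j) = j := by
  rcases Nat.eq_zero_or_pos j with h | hj
  · subst h; rw [sig_zero, sig_zero]
  by_cases h : lev w < lev j
  · rcases sig_cases w j hw hj h with ⟨hs, -⟩ | ⟨-, -, hs, -⟩
    · rw [hs, hs]
    · exact hs
  · rw [sig_eq_self w j h, sig_eq_self w j h]

theorem sig_inj (w a b : ℕ) (hw : 1 ≤ w) (h : sig w a = sig w b) : a = b := by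
  have := congrArg (sig w) h
  rwa [sig_invol w a hw, sig_invol w b hw] at this

theorem L2inner_add_left (f g h : ℝ → ℝ)
    (hf : IntervalIntegrable (fun t => f t * h t) volume 0 1)
    (hg : IntervalIntegrable (fun t => g t * h t) volume 0 1) :
    L2inner (f + g) h = L2inner f h + L2inner g h := by
  rw [L2inner, L2inner, L2inner, ← intervalIntegral.integral_add hf hg]
  exact intervalIntegral.integral_congr (fun t _ => by simp [Pi.add_apply, add_mul])

theorem L2inner_sub_left (f g h : ℝ → ℝ)
    (hf : IntervalIntegrable (fun t => f t * h t) volume 0 1)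
    (hg : IntervalIntegrable (fun t => g t * h t) volume 0 1) :
    L2inner (f - g) h = L2inner f h - L2inner g h := by
  rw [L2inner, L2inner, L2inner, ← intervalIntegral.integral_sub hf hg]
  exact intervalIntegral.integral_congr (fun t _ => by simp [Pi.sub_apply, sub_mul])

theorem L2inner_smul_left (c : ℝ) (f h : ℝ → ℝ) :
    L2inner (c • f) h = c * L2inner f h := by
  rw [L2inner, L2inner, ← intervalIntegral.integral_const_mul]
  exact intervalIntegral.integral_congr (fun t _ => by simp [Pi.smul_apply]; ring)

theorem L2inner_zero_left (h : ℝ → ℝ) : L2inner 0 h = 0 := by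
  rw [L2inner]
  simp

theorem L2inner_neg_left (f h : ℝ → ℝ) : L2inner (-f) h = - L2inner f h := by
  rw [L2inner, L2inner, ← intervalIntegral.integral_neg]
  exact intervalIntegral.integral_congr (fun t _ => by simp [Pi.neg_apply])

theorem L2inner_neg_right (f h : ℝ → ℝ) : L2inner f (-h) = - L2inner f h := by
  rw [L2inner, L2inner, ← intervalIntegral.integral_neg]
  exact intervalIntegral.integral_congr (fun t _ => by simp [Pi.neg_apply])

theorem intInt_span_mul (S : Set ℕ) (f : ℝ → ℝ)
    (hf : f ∈ Submodule.span ℝ (haar '' S)) (a : ℕ) :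
    IntervalIntegrable (fun t => f t * haar a t) volume 0 1 := by
  induction hf using Submodule.span_induction with
  | mem x hx =>
    obtain ⟨i, -, rfl⟩ := hx
    exact intInt_haar_mul i a
  | zero => simpa using intervalIntegrable_const (c := (0:ℝ))
  | add x y hx hy ihx ihy =>
    have : (fun t => (x + y) t * haar a t)
        = fun t => x t * haar a t + y t * haar a t := by
      funext t; simp [Pi.add_apply]; ring
    rw [this]
    exact ihx.add ihy
  | smul c x hx ihx =>
    have : (fun t => (c • x) t * haar a t) = fun t => c * (x t * haar a t) := by
      funext t; simp [Pi.smul_apply]; ring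
    rw [this]
    exact ihx.const_mul c

/-- `gmap` as a linear map. -/
def Glin (w : ℕ) : (ℝ → ℝ) →ₗ[ℝ] (ℝ → ℝ) where
  toFun := gmap w
  map_add' := gmap_add w
  map_smul' := fun c f => gmap_smul w c f

/-- The successive symmetrization of `P`, processing reflections in decreasing index order
`M-1, M-2, …`. -/
def symDown (P : (ℝ → ℝ) →ₗ[ℝ] (ℝ → ℝ)) (M : ℕ) : ℕ → ((ℝ → ℝ) →ₗ[ℝ] (ℝ → ℝ))
  | 0 => P
  | k+1 => (2⁻¹ : ℝ) • (symDown P M k + Glin (M - 1 - k) ∘ₗ symDown P M k ∘ₗ Glin (M - 1 - k))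

theorem symDown_apply (P : (ℝ → ℝ) →ₗ[ℝ] (ℝ → ℝ)) (M k : ℕ) (f : ℝ → ℝ) :
    symDown P M (k+1) f
      = (2⁻¹ : ℝ) • (symDown P M k f + gmap (M - 1 - k) (symDown P M k (gmap (M - 1 - k) f))) := by
  rfl

theorem gmap_inner_basis (w a b : ℕ) (hw : 1 ≤ w) :
    L2inner (gmap w (haar a)) (gmap w (haar b)) = L2inner (haar a) (haar b) := by
  by_cases hab : a = b
  · subst hab
    by_cases haw : a = w
    · subst haw
      rw [gmap_haar_self a hw, L2inner_neg_left, L2inner_neg_right]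
      ring
    · rw [gmap_haar w a hw haw, L2inner_haar_self, L2inner_haar_self]
      by_cases h0 : a = 0
      · subst h0; rw [sig_zero]
      · rw [if_neg h0, if_neg (by
          intro hc
          have := sig_invol w a hw
          rw [hc, sig_zero] at this
          exact h0 this.symm), dl, dl, sig_lev w a hw]
  · have hone : L2inner (haar a) (haar b) = 0 := L2inner_haar_ne a b hab
    rw [hone]
    by_cases haw : a = w
    · subst haw
      rw [gmap_haar_self a hw, gmap_haar a b hw (fun hc => hab hc.symm), L2inner_neg_left,
        L2inner_haar_ne a (sig a b) (by
          intro hc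
          have := sig_invol a b hw
          rw [← hc, sig_eq_self a a (lt_irrefl _)] at this
          exact hab this), neg_zero]
    · by_cases hbw : b = w
      · subst hbw
        rw [gmap_haar_self b hw, gmap_haar b a hw (fun hc => hab hc), L2inner_neg_right,
          L2inner_haar_ne (sig b a) b (by
            intro hc
            have := sig_invol b a hw
            rw [hc, sig_eq_self b b (lt_irrefl _)] at this
            exact hab this.symm), neg_zero]
      · rw [gmap_haar w a hw haw, gmap_haar w b hw hbw,
          L2inner_haar_ne _ _ (fun hc => hab (sig_inj w a b hw hc))]

end
end Stmt11

namespace Stmt11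
noncomputable section
open Set MeasureTheory

theorem L2inner_sum_haar {ι : Type*} [DecidableEq ι] (s : Finset ι) (c : ι → ℝ) (v : ι → ℕ)
    (a : ℕ) :
    L2inner (∑ k ∈ s, c k • haar (v k)) (haar a)
      = ∑ k ∈ s, c k * L2inner (haar (v k)) (haar a) := by
  induction s using Finset.induction with
  | empty => simpa using L2inner_zero_left (haar a)
  | @insert x s hx ih =>
    rw [Finset.sum_insert hx, Finset.sum_insert hx,
      L2inner_add_left _ _ _
        (intInt_span_mul Set.univ _
          (Submodule.smul_mem _ _ (Submodule.subset_span ⟨v x, trivial, rfl⟩)) a)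
        (intInt_span_mul Set.univ _
          (Submodule.sum_mem _ (fun i _ =>
            Submodule.smul_mem _ _ (Submodule.subset_span ⟨v i, trivial, rfl⟩))) a),
      L2inner_smul_left, ih]

end
end Stmt11

open Stmt11 in
set_option maxHeartbeats 2000000 in
/-- Andrew-type averaging: let `X_n = span{h_i : i < 2^{n+1}}`, let `‖·‖ = N`
be a norm on `X_n` for which each reflection `g_i` (`1 ≤ i < 2^{n+1}`) is an isometry,
let `A ⊆ {-1,0,…,n}` be nonempty and `Y = span(⋃_{k∈A} H_k)` (with `H_{-1} = {h₀}`).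
Then every linear projection `P` of `X_n` onto `Y` satisfies `‖P‖ ≥ ‖P_Y‖`, where `P_Y`
is the `L²`-orthogonal projection onto `Y`: every bound `K` for `P` is a bound for `P_Y`. -/
theorem stmt11 (n : ℕ) (X : Submodule ℝ (ℝ → ℝ))
    (hX : X = Submodule.span ℝ (haar '' Set.Iio (2 ^ (n + 1))))
    (N : (ℝ → ℝ) → ℝ)
    (hN0 : ∀ f ∈ X, 0 ≤ N f)
    (hN1 : ∀ f ∈ X, ∀ g ∈ X, N (f + g) ≤ N f + N g)
    (hN2 : ∀ (c : ℝ), ∀ f ∈ X, N (c • f) = |c| * N f)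
    (hN3 : ∀ f ∈ X, N f = 0 → f = 0)
    (hiso : ∀ i : ℕ, 1 ≤ i → i < 2 ^ (n + 1) → ∀ f ∈ X, N (gmap i f) = N f)
    (A : Finset ℤ) (hA : A.Nonempty) (hAsub : ∀ k ∈ A, -1 ≤ k ∧ k ≤ (n : ℤ))
    (Y : Submodule ℝ (ℝ → ℝ))
    (hY : Y = Submodule.span ℝ
      (⋃ k ∈ A, if k = -1 then {haar 0} else haarLevel k.toNat))
    (PY : (ℝ → ℝ) →ₗ[ℝ] (ℝ → ℝ))
    (hPY1 : ∀ f ∈ X, PY f ∈ Y) (hPY2 : ∀ f ∈ Y, PY f = f)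
    (hPY3 : ∀ f ∈ X, ∀ g ∈ Y, L2inner (f - PY f) g = 0)
    (P : (ℝ → ℝ) →ₗ[ℝ] (ℝ → ℝ))
    (hP1 : ∀ f ∈ X, P f ∈ Y) (hP2 : ∀ f ∈ Y, P f = f)
    (K : ℝ) (hK : ∀ f ∈ X, N (P f) ≤ K * N f) :
    ∀ f ∈ X, N (PY f) ≤ K * N f := by
  classical
  have hM2 : 2 ≤ 2 ^ (n + 1) := by
    calc 2 = 2 ^ 1 := rfl
      _ ≤ 2 ^ (n + 1) := Nat.pow_le_pow_right (by norm_num) (by omega)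
  have hXmem : ∀ i, i < 2 ^ (n + 1) → haar i ∈ X := by
    intro i hi
    rw [hX]
    exact Submodule.subset_span ⟨i, hi, rfl⟩
  -- the index set of `Y`
  set inY : ℕ → Prop := fun i => (i = 0 ∧ (-1:ℤ) ∈ A) ∨ (1 ≤ i ∧ ((lev i : ℤ) ∈ A)) with hinY
  have hYeq : Y = Submodule.span ℝ (haar '' {i | inY i}) := by
    rw [hY]
    congr 1
    ext g
    simp only [Set.mem_iUnion]
    constructor
    · rintro ⟨k, hk, hg⟩
      by_cases hk1 : k = -1
      · rw [if_pos hk1, Set.mem_singleton_iff] at hg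
        exact ⟨0, Or.inl ⟨rfl, hk1 ▸ hk⟩, hg.symm⟩
      · rw [if_neg hk1] at hg
        obtain ⟨i, hi, rfl⟩ := hg
        have hk0 : 0 ≤ k := by have := (hAsub k hk).1; omega
        rw [Set.mem_Ico] at hi
        have hlevi : lev i = k.toNat := lev_eq _ _ hi.1 hi.2
        have hi1 : 1 ≤ i := le_trans Nat.one_le_two_pow hi.1
        refine ⟨i, Or.inr ⟨hi1, ?_⟩, rfl⟩
        rw [hlevi, Int.toNat_of_nonneg hk0]
        exact hk
    · rintro ⟨i, hi, rfl⟩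
      rcases hi with ⟨rfl, hA1⟩ | ⟨h1, hA2⟩
      · exact ⟨-1, hA1, by rw [if_pos rfl]; exact Set.mem_singleton _⟩
      · refine ⟨(lev i : ℤ), hA2, ?_⟩
        rw [if_neg (by omega), Int.toNat_natCast]
        exact ⟨i, Set.mem_Ico.2 ⟨pow_lev_le i h1, lt_pow_lev i⟩, rfl⟩
  have hYltM : ∀ i, inY i → i < 2 ^ (n + 1) := by
    intro i h
    rcases h with ⟨rfl, -⟩ | ⟨h1, h2⟩
    · omega
    · have hkn : (lev i : ℤ) ≤ n := (hAsub _ h2).2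
      have hkn' : lev i ≤ n := by exact_mod_cast hkn
      calc i < 2 ^ (lev i + 1) := lt_pow_lev i
        _ ≤ 2 ^ (n + 1) := Nat.pow_le_pow_right (by norm_num) (by omega)
  have hYmem : ∀ i, inY i → haar i ∈ Y := by
    intro i h
    rw [hYeq]
    exact Submodule.subset_span ⟨i, h, rfl⟩
  have hYX : Y ≤ X := by
    rw [hYeq, hX]
    apply Submodule.span_mono
    rintro g ⟨i, hi, rfl⟩
    exact ⟨i, hYltM i hi, rfl⟩
  have hsig_lt : ∀ w j, 1 ≤ w → j < 2 ^ (n + 1) → sig w j < 2 ^ (n + 1) := by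
    intro w j hw hj
    rcases Nat.eq_zero_or_pos j with rfl | hj1
    · rw [sig_zero]; omega
    · have hlev : lev (sig w j) = lev j := sig_lev w j hw
      have hlevj : lev j ≤ n := by
        by_contra hc
        push_neg at hc
        have h1 : 2 ^ (n + 1) ≤ 2 ^ lev j := Nat.pow_le_pow_right (by norm_num) (by omega)
        have h2 := pow_lev_le j hj1
        omega
      calc sig w j < 2 ^ (lev (sig w j) + 1) := lt_pow_lev _
        _ = 2 ^ (lev j + 1) := by rw [hlev]
        _ ≤ 2 ^ (n + 1) := Nat.pow_le_pow_right (by norm_num) (by omega)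
  have hGX : ∀ w, 1 ≤ w → w < 2 ^ (n + 1) → ∀ g ∈ X, gmap w g ∈ X := by
    intro w hw hwM g hg
    rw [hX] at hg ⊢
    induction hg using Submodule.span_induction with
    | mem x hx =>
      obtain ⟨j, hj, rfl⟩ := hx
      rw [Set.mem_Iio] at hj
      by_cases hjw : j = w
      · subst hjw
        rw [gmap_haar_self j hw]
        exact Submodule.neg_mem _ (Submodule.subset_span ⟨j, hj, rfl⟩)
      · rw [gmap_haar w j hw hjw]
        exact Submodule.subset_span ⟨sig w j, hsig_lt w j hw hj, rfl⟩
    | zero =>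
      have h0 : gmap w (0 : ℝ → ℝ) = 0 := (Glin w).map_zero
      rw [h0]
      exact Submodule.zero_mem _
    | add x y hx hy ihx ihy =>
      rw [gmap_add]
      exact Submodule.add_mem _ ihx ihy
    | smul c x hx ihx =>
      rw [gmap_smul]
      exact Submodule.smul_mem _ _ ihx
  have hGY : ∀ w, 1 ≤ w → w < 2 ^ (n + 1) → ∀ g ∈ Y, gmap w g ∈ Y := by
    intro w hw hwM g hg
    rw [hYeq] at hg ⊢
    induction hg using Submodule.span_induction with
    | mem x hx =>
      obtain ⟨i, hi, rfl⟩ := hx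
      by_cases hiw : i = w
      · subst hiw
        rw [gmap_haar_self i hw]
        exact Submodule.neg_mem _ (Submodule.subset_span ⟨i, hi, rfl⟩)
      · rw [gmap_haar w i hw hiw]
        rcases hi with ⟨rfl, hA1⟩ | ⟨h1, hA2⟩
        · rw [sig_zero]
          exact Submodule.subset_span ⟨0, Or.inl ⟨rfl, hA1⟩, rfl⟩
        · refine Submodule.subset_span ⟨sig w i, Or.inr ⟨sig_pos w i hw h1, ?_⟩, rfl⟩
          rw [sig_lev w i hw]
          exact hA2
    | zero =>
      have h0 : gmap w (0 : ℝ → ℝ) = 0 := (Glin w).map_zero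
      rw [h0]
      exact Submodule.zero_mem _
    | add x y hx hy ihx ihy =>
      rw [gmap_add]
      exact Submodule.add_mem _ ihx ihy
    | smul c x hx ihx =>
      rw [gmap_smul]
      exact Submodule.smul_mem _ _ ihx
  have hIntX : ∀ g ∈ X, ∀ a, IntervalIntegrable (fun t => g t * haar a t)
      MeasureTheory.volume 0 1 := by
    intro g hg a
    rw [hX] at hg
    exact intInt_span_mul _ g hg a
  -- inner product invariance under gmap, for members of X
  have hGinner : ∀ w, 1 ≤ w → w < 2 ^ (n + 1) → ∀ g ∈ X, ∀ a,
      L2inner (gmap w g) (gmap w (haar a)) = L2inner g (haar a) := by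
    intro w hw hwM g hg a
    have hIg : ∀ g ∈ X, ∀ b : ℕ,
        IntervalIntegrable (fun t => g t * gmap w (haar b) t) MeasureTheory.volume 0 1 := by
      intro g hg b
      by_cases hbw : b = w
      · subst hbw
        rw [gmap_haar_self b hw]
        have heq : (fun t => g t * (-haar b) t) = fun t => -(g t * haar b t) :=
          funext fun t => by simp [Pi.neg_apply]
        rw [heq]
        exact (hIntX g hg b).neg
      · rw [gmap_haar w b hw hbw]
        exact hIntX g hg (sig w b)
    rw [hX] at hg
    induction hg using Submodule.span_induction with
    | mem x hx =>
      obtain ⟨j, hj, rfl⟩ := hx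
      exact gmap_inner_basis w j a hw
    | zero =>
      have h0 : gmap w (0 : ℝ → ℝ) = 0 := (Glin w).map_zero
      rw [h0, L2inner_zero_left, L2inner_zero_left]
    | add x y hx hy ihx ihy =>
      have hxX : x ∈ X := by rw [hX]; exact hx
      have hyX : y ∈ X := by rw [hX]; exact hy
      rw [gmap_add,
        L2inner_add_left _ _ _ (hIg _ (hGX w hw hwM x hxX) a) (hIg _ (hGX w hw hwM y hyX) a),
        L2inner_add_left x y (haar a) (hIntX x hxX a) (hIntX y hyX a), ihx, ihy]
    | smul c x hx ihx =>
      rw [gmap_smul, L2inner_smul_left, L2inner_smul_left, ihx]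
  -- inner products of the orthogonal projection
  have hPYin : ∀ g ∈ X, ∀ a, inY a → L2inner (PY g) (haar a) = L2inner g (haar a) := by
    intro g hg a ha
    have h3 := hPY3 g hg (haar a) (hYmem a ha)
    rw [L2inner_sub_left g (PY g) (haar a) (hIntX g hg a)
      (hIntX (PY g) (hYX (hPY1 g hg)) a)] at h3
    linarith
  -- uniqueness : an element of Y orthogonal to all generators is zero
  have huniq : ∀ g ∈ Y, (∀ a, inY a → L2inner g (haar a) = 0) → g = 0 := by
    intro g hg hval
    rw [hYeq] at hg
    obtain ⟨c, hsupp, hsum⟩ := Submodule.mem_span_set.1 hg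
    let idx : (ℝ → ℝ) → ℕ := fun u => if h : ∃ i, inY i ∧ haar i = u then h.choose else 0
    have hidx : ∀ u ∈ c.support, inY (idx u) ∧ haar (idx u) = u := by
      intro u hu
      obtain ⟨i, hi, he⟩ := hsupp hu
      have hex : ∃ i, inY i ∧ haar i = u := ⟨i, hi, he⟩
      simp only [idx, dif_pos hex]
      exact hex.choose_spec
    have hgsum : g = ∑ u ∈ c.support, c u • haar (idx u) := by
      rw [← hsum, Finsupp.sum]
      exact Finset.sum_congr rfl (fun u hu => by rw [(hidx u hu).2])
    have hzero : ∀ v ∈ c.support, c v = 0 := by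
      intro v hv
      have h0 : L2inner g (haar (idx v)) = 0 := hval _ (hidx v hv).1
      rw [hgsum, L2inner_sum_haar] at h0
      rw [Finset.sum_eq_single v (fun u hu hne => by
          rw [L2inner_haar_ne _ _ (fun hc => hne (by
            rw [← (hidx u hu).2, ← (hidx v hv).2, hc])), mul_zero])
        (fun hc => absurd hv hc)] at h0
      rcases mul_eq_zero.1 h0 with h | h
      · exact h
      · exact absurd h (ne_of_gt (L2inner_haar_self_pos _))
    have hcempty : c.support = ∅ :=
      Finset.eq_empty_of_forall_notMem (fun v hv => (Finsupp.mem_support_iff.1 hv) (hzero v hv))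
    rw [hgsum, hcempty, Finset.sum_empty]
  -- the symmetrization invariants
  have hinv : ∀ k, k ≤ 2 ^ (n + 1) - 1 →
      (∀ g ∈ X, symDown P (2 ^ (n + 1)) k g ∈ Y) ∧
      (∀ g ∈ Y, symDown P (2 ^ (n + 1)) k g = g) ∧
      (∀ g ∈ X, N (symDown P (2 ^ (n + 1)) k g) ≤ K * N g) ∧
      (∀ m, 2 ^ (n + 1) - k ≤ m → m < 2 ^ (n + 1) → ∀ f : ℝ → ℝ,
        symDown P (2 ^ (n + 1)) k (gmap m f) = gmap m (symDown P (2 ^ (n + 1)) k f)) := by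
    intro k
    induction k with
    | zero =>
      intro _
      exact ⟨hP1, hP2, hK, fun m hm hmM f => by omega⟩
    | succ k ih =>
      intro hk1
      obtain ⟨ih1, ih2, ih3, ih4⟩ := ih (by omega)
      have hi1 : 1 ≤ 2 ^ (n + 1) - 1 - k := by omega
      have hiM : 2 ^ (n + 1) - 1 - k < 2 ^ (n + 1) := by omega
      refine ⟨?_, ?_, ?_, ?_⟩
      · intro g hg
        rw [symDown_apply]
        exact Submodule.smul_mem _ _ (Submodule.add_mem _ (ih1 g hg)
          (hGY _ hi1 hiM _ (ih1 _ (hGX _ hi1 hiM g hg))))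
      · intro g hg
        rw [symDown_apply, ih2 g hg, ih2 _ (hGY _ hi1 hiM g hg), gmap_invol _ hi1]
        funext t
        simp only [Pi.smul_apply, Pi.add_apply, smul_eq_mul]
        ring
      · intro g hg
        rw [symDown_apply]
        have hu : symDown P (2 ^ (n + 1)) k g ∈ Y := ih1 g hg
        have hgi : gmap (2 ^ (n + 1) - 1 - k) g ∈ X := hGX _ hi1 hiM g hg
        have hv' : symDown P (2 ^ (n + 1)) k (gmap (2 ^ (n + 1) - 1 - k) g) ∈ Y := ih1 _ hgi
        have hvX : gmap (2 ^ (n + 1) - 1 - k)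
            (symDown P (2 ^ (n + 1)) k (gmap (2 ^ (n + 1) - 1 - k) g)) ∈ X :=
          hYX (hGY _ hi1 hiM _ hv')
        have huX : symDown P (2 ^ (n + 1)) k g ∈ X := hYX hu
        rw [hN2 _ _ (Submodule.add_mem _ huX hvX)]
        have h1 := hN1 _ huX _ hvX
        have h2 : N (gmap (2 ^ (n + 1) - 1 - k)
            (symDown P (2 ^ (n + 1)) k (gmap (2 ^ (n + 1) - 1 - k) g)))
            = N (symDown P (2 ^ (n + 1)) k (gmap (2 ^ (n + 1) - 1 - k) g)) :=
          hiso _ hi1 hiM _ (hYX hv')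
        have h3 := ih3 _ hgi
        have h4 : N (gmap (2 ^ (n + 1) - 1 - k) g) = N g := hiso _ hi1 hiM g hg
        have h5 := ih3 g hg
        have habs : |(2⁻¹ : ℝ)| = 2⁻¹ := by norm_num
        rw [habs]
        rw [h4] at h3
        rw [h2] at h1
        linarith
      · intro m hm hmM f
        by_cases hmi : m = 2 ^ (n + 1) - 1 - k
        · rw [symDown_apply, symDown_apply, ← hmi, gmap_invol m (by omega), gmap_smul, gmap_add,
            gmap_invol m (by omega), add_comm (symDown P (2 ^ (n + 1)) k (gmap m f))]
        · have hmgt : 2 ^ (n + 1) - 1 - k < m := by omega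
          have hm1 : 1 ≤ m := by omega
          have hlevim : lev (2 ^ (n + 1) - 1 - k) ≤ lev m := lev_mono (le_of_lt hmgt)
          have hσlev : lev (sig (2 ^ (n + 1) - 1 - k) m) = lev m := sig_lev _ m hi1
          have hσpos : 1 ≤ sig (2 ^ (n + 1) - 1 - k) m := sig_pos _ m hi1 hm1
          have hσgt : 2 ^ (n + 1) - 1 - k < sig (2 ^ (n + 1) - 1 - k) m := by
            by_cases hll : lev (2 ^ (n + 1) - 1 - k) < lev m
            · have h1 : 2 ^ lev m ≤ sig (2 ^ (n + 1) - 1 - k) m := by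
                rw [← hσlev]
                exact pow_lev_le _ hσpos
              have h2 : 2 ^ (n + 1) - 1 - k < 2 ^ (lev (2 ^ (n + 1) - 1 - k) + 1) :=
                lt_pow_lev _
              have h3 : 2 ^ (lev (2 ^ (n + 1) - 1 - k) + 1) ≤ 2 ^ lev m :=
                Nat.pow_le_pow_right (by norm_num) (by omega)
              omega
            · rw [sig_eq_self _ m hll]
              exact hmgt
          have hσM : sig (2 ^ (n + 1) - 1 - k) m < 2 ^ (n + 1) := hsig_lt _ m hi1 hmM
          have e1 : symDown P (2 ^ (n + 1)) k (gmap m f)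
              = gmap m (symDown P (2 ^ (n + 1)) k f) := ih4 m (by omega) hmM f
          have e2 : gmap m (gmap (2 ^ (n + 1) - 1 - k)
              (symDown P (2 ^ (n + 1)) k (gmap (2 ^ (n + 1) - 1 - k) f)))
              = gmap (2 ^ (n + 1) - 1 - k) (symDown P (2 ^ (n + 1)) k
                  (gmap (2 ^ (n + 1) - 1 - k) (gmap m f))) := by
            have h := gmap_gmap (2 ^ (n + 1) - 1 - k) (sig (2 ^ (n + 1) - 1 - k) m) hi1 hσpos
              (by omega) (by rw [hσlev]; exact hlevim) f
            rw [sig_invol _ m hi1] at h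
            rw [gmap_gmap _ m hi1 hm1 (by omega) hlevim,
              ← ih4 (sig (2 ^ (n + 1) - 1 - k) m) (by omega) hσM
                (gmap (2 ^ (n + 1) - 1 - k) f), h]
          rw [symDown_apply, symDown_apply, gmap_smul, gmap_add, e1, e2]
  obtain ⟨hQ1, hQ2, hQ3, hQ4⟩ := hinv (2 ^ (n + 1) - 1) le_rfl
  have hQ4' : ∀ m, 1 ≤ m → m < 2 ^ (n + 1) → ∀ f : ℝ → ℝ,
      symDown P (2 ^ (n + 1)) (2 ^ (n + 1) - 1) (gmap m f)
        = gmap m (symDown P (2 ^ (n + 1)) (2 ^ (n + 1) - 1) f) :=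
    fun m h1 h2 f => hQ4 m (by omega) h2 f
  -- the symmetrized operator has the same Y-inner products as the identity
  have hQin : ∀ g ∈ X, ∀ a, inY a →
      L2inner (symDown P (2 ^ (n + 1)) (2 ^ (n + 1) - 1) g) (haar a) = L2inner g (haar a) := by
    intro g hg a ha
    have haM : a < 2 ^ (n + 1) := hYltM a ha
    rw [hX] at hg
    induction hg using Submodule.span_induction with
    | mem x hx =>
      obtain ⟨j, hj, rfl⟩ := hx
      rw [Set.mem_Iio] at hj
      by_cases hjY : inY j
      · rw [hQ2 (haar j) (hYmem j hjY)]
      · have haj : a ≠ j := fun hc => hjY (hc ▸ ha)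
        have hrhs : L2inner (haar j) (haar a) = 0 :=
          L2inner_haar_ne j a (fun hc => haj hc.symm)
        rw [hrhs]
        have hQjX : symDown P (2 ^ (n + 1)) (2 ^ (n + 1) - 1) (haar j) ∈ X :=
          hYX (hQ1 _ (hXmem j hj))
        by_cases hj0 : j = 0
        · subst hj0
          have ha1 : 1 ≤ a := by
            rcases Nat.eq_zero_or_pos a with rfl | h
            · exact absurd ha hjY
            · exact h
          have hz : L2inner (symDown P (2 ^ (n + 1)) (2 ^ (n + 1) - 1) (haar 0)) (haar a)
              = - L2inner (symDown P (2 ^ (n + 1)) (2 ^ (n + 1) - 1) (haar 0)) (haar a) := by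
            calc L2inner (symDown P (2 ^ (n + 1)) (2 ^ (n + 1) - 1) (haar 0)) (haar a)
                = L2inner (gmap a (symDown P (2 ^ (n + 1)) (2 ^ (n + 1) - 1) (haar 0)))
                  (gmap a (haar a)) := (hGinner a ha1 haM _ hQjX a).symm
              _ = L2inner (symDown P (2 ^ (n + 1)) (2 ^ (n + 1) - 1) (gmap a (haar 0)))
                  (gmap a (haar a)) := by rw [hQ4' a ha1 haM]
              _ = L2inner (symDown P (2 ^ (n + 1)) (2 ^ (n + 1) - 1) (haar 0)) (-(haar a)) := by
                  rw [gmap_haar a 0 ha1 (by omega), sig_zero, gmap_haar_self a ha1]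
              _ = - L2inner (symDown P (2 ^ (n + 1)) (2 ^ (n + 1) - 1) (haar 0)) (haar a) :=
                  L2inner_neg_right _ _
          linarith
        · have hj1 : 1 ≤ j := by omega
          by_cases hcase : a = 0 ∨ lev a < lev j
          · -- use w = j
            have key : gmap j (haar a) = haar a := by
              rw [gmap_haar j a hj1 (fun hc => haj hc), sig_eq_self j a ?_]
              rcases hcase with rfl | hlt
              · rw [lev_zero]; omega
              · omega
            have hz : L2inner (symDown P (2 ^ (n + 1)) (2 ^ (n + 1) - 1) (haar j)) (haar a)
                = - L2inner (symDown P (2 ^ (n + 1)) (2 ^ (n + 1) - 1) (haar j)) (haar a) := by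
              calc L2inner (symDown P (2 ^ (n + 1)) (2 ^ (n + 1) - 1) (haar j)) (haar a)
                  = L2inner (gmap j (symDown P (2 ^ (n + 1)) (2 ^ (n + 1) - 1) (haar j)))
                    (gmap j (haar a)) := (hGinner j hj1 hj _ hQjX a).symm
                _ = L2inner (symDown P (2 ^ (n + 1)) (2 ^ (n + 1) - 1) (gmap j (haar j)))
                    (gmap j (haar a)) := by rw [hQ4' j hj1 hj]
                _ = L2inner (symDown P (2 ^ (n + 1)) (2 ^ (n + 1) - 1) (-(haar j))) (haar a) := by
                    rw [gmap_haar_self j hj1, key]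
                _ = L2inner (-(symDown P (2 ^ (n + 1)) (2 ^ (n + 1) - 1) (haar j))) (haar a) := by
                    rw [map_neg]
                _ = - L2inner (symDown P (2 ^ (n + 1)) (2 ^ (n + 1) - 1) (haar j)) (haar a) :=
                    L2inner_neg_left _ _
            linarith
          · push_neg at hcase
            obtain ⟨ha0, hge⟩ := hcase
            have ha1 : 1 ≤ a := by omega
            have hA2 : ((lev a : ℤ)) ∈ A := by
              rcases ha with ⟨h0, -⟩ | ⟨-, h⟩
              · exact absurd h0 ha0
              · exact h
            have key : gmap a (haar j) = haar j := by
              rw [gmap_haar a j ha1 (fun hc => haj hc.symm), sig_eq_self a j (by omega)]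
            have hz : L2inner (symDown P (2 ^ (n + 1)) (2 ^ (n + 1) - 1) (haar j)) (haar a)
                = - L2inner (symDown P (2 ^ (n + 1)) (2 ^ (n + 1) - 1) (haar j)) (haar a) := by
              calc L2inner (symDown P (2 ^ (n + 1)) (2 ^ (n + 1) - 1) (haar j)) (haar a)
                  = L2inner (gmap a (symDown P (2 ^ (n + 1)) (2 ^ (n + 1) - 1) (haar j)))
                    (gmap a (haar a)) := (hGinner a ha1 haM _ hQjX a).symm
                _ = L2inner (symDown P (2 ^ (n + 1)) (2 ^ (n + 1) - 1) (gmap a (haar j)))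
                    (gmap a (haar a)) := by rw [hQ4' a ha1 haM]
                _ = L2inner (symDown P (2 ^ (n + 1)) (2 ^ (n + 1) - 1) (haar j)) (-(haar a)) := by
                    rw [key, gmap_haar_self a ha1]
                _ = - L2inner (symDown P (2 ^ (n + 1)) (2 ^ (n + 1) - 1) (haar j)) (haar a) :=
                    L2inner_neg_right _ _
            linarith
    | zero =>
      rw [map_zero, L2inner_zero_left]
    | add x y hx hy ihx ihy =>
      have hxX : x ∈ X := by rw [hX]; exact hx
      have hyX : y ∈ X := by rw [hX]; exact hy
      rw [map_add,
        L2inner_add_left _ _ _ (hIntX _ (hYX (hQ1 x hxX)) a) (hIntX _ (hYX (hQ1 y hyX)) a),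
        L2inner_add_left x y (haar a) (hIntX x hxX a) (hIntX y hyX a), ihx, ihy]
    | smul c x hx ihx =>
      rw [map_smul, L2inner_smul_left, L2inner_smul_left, ihx]
  -- conclusion
  intro f hf
  have hQf : symDown P (2 ^ (n + 1)) (2 ^ (n + 1) - 1) f ∈ Y := hQ1 f hf
  have hd : PY f - symDown P (2 ^ (n + 1)) (2 ^ (n + 1) - 1) f = 0 := by
    apply huniq _ (Submodule.sub_mem _ (hPY1 f hf) hQf)
    intro a ha
    rw [L2inner_sub_left _ _ _ (hIntX _ (hYX (hPY1 f hf)) a) (hIntX _ (hYX hQf) a),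
      hPYin f hf a ha, hQin f hf a ha, sub_self]
  have heq : PY f = symDown P (2 ^ (n + 1)) (2 ^ (n + 1) - 1) f := sub_eq_zero.1 hd
  rw [heq]
  exact hQ3 f hf
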